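/- A finite group G has the property that every Cayley graph Cay(G,S) over a symmetric subset S (1 ∉ S) has integer eigenvalues if and only if every connected Cayley graph of G (i.e., with S generating G) has integer eigenvalues. -/

import Mathlib

open Classical in
/-- Adjacency matrix of the Cayley graph `Cay(G,S)`: `x ~ y` iff `x * y⁻¹ ∈ S`. -/
noncomputable def cayleyMatrix {G : Type*} [Group G] (S : Set G) : Matrix G G ℝ :=
  fun x y => if x * y⁻¹ ∈ S then 1 else 0

/-- All eigenvalues of the real matrix `A` are integers. -/
noncomputable def isIntegralMatrix {n : Type*} [Finite n] (A : Matrix n n ℝ) : Prop :=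
  letI := Fintype.ofFinite n
  letI := Classical.decEq n
  ∀ μ : ℝ, Module.End.HasEigenvalue (Matrix.toLin' A) μ → ∃ z : ℤ, μ = (z : ℝ)


lemma isIntegralMatrix_iff {n : Type*} [Fintype n] [DecidableEq n] (A : Matrix n n ℝ) :
    isIntegralMatrix A ↔ ∀ μ : ℝ, (∃ v, v ≠ 0 ∧ A.mulVec v = μ • v) → ∃ z : ℤ, μ = (z : ℝ) := by
  unfold isIntegralMatrix
  have h1 : Fintype.ofFinite n = ‹Fintype n› := Subsingleton.elim _ _
  have h2 : Classical.decEq n = ‹DecidableEq n› := Subsingleton.elim _ _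
  rw [h1, h2]
  constructor
  · intro h μ ⟨v, hv0, hv⟩
    exact h μ (Module.End.hasEigenvalue_of_hasEigenvector
      ⟨Module.End.mem_eigenspace_iff.2 (by rw [Matrix.toLin'_apply, hv]), hv0⟩)
  · intro h μ hμ
    obtain ⟨v, hv, hv0⟩ := hμ.exists_hasEigenvector
    exact h μ ⟨v, hv0, by rw [← Matrix.toLin'_apply A v, Module.End.mem_eigenspace_iff.1 hv]⟩

open Classical in
lemma cayley_sum_row {G : Type*} [Group G] [Fintype G] (S : Set G) (x : G) :
    ∑ y, cayleyMatrix S x y = ∑ z, (if z ∈ S then (1:ℝ) else 0) :=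
  Fintype.sum_equiv ((Equiv.inv G).trans (Equiv.mulLeft x))
    (fun y => cayleyMatrix S x y) (fun z => if z ∈ S then (1:ℝ) else 0)
    (fun y => by simp [cayleyMatrix])

open Classical in
lemma cayley_sum_col {G : Type*} [Group G] [Fintype G] (S : Set G) (y : G) :
    ∑ x, cayleyMatrix S x y = ∑ z, (if z ∈ S then (1:ℝ) else 0) :=
  Fintype.sum_equiv (Equiv.mulRight y⁻¹)
    (fun x => cayleyMatrix S x y) (fun z => if z ∈ S then (1:ℝ) else 0)
    (fun x => by simp [cayleyMatrix]; congr)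

open Classical in
lemma transfer {G : Type*} [Group G] [Fintype G] (S : Set G) (h1 : (1:G) ∉ S)
    (hT : isIntegralMatrix (cayleyMatrix ((S ∪ {1})ᶜ : Set G))) :
    isIntegralMatrix (cayleyMatrix S) := by
  rw [isIntegralMatrix_iff] at hT ⊢
  rintro μ ⟨v, hv0, hv⟩
  set k : ℝ := ∑ z, (if z ∈ S then (1:ℝ) else 0) with hk
  by_cases hμk : μ = k
  · refine ⟨(Finset.univ.filter (fun z => z ∈ S)).card, ?_⟩
    rw [hμk, hk, Finset.sum_boole]; norm_cast
  -- sum of v is zero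
  have hs : ∑ x, v x = 0 := by
    have e1 : ∑ x, (cayleyMatrix S).mulVec v x = μ * ∑ x, v x := by
      rw [hv]; simp [Finset.mul_sum]
    have e2 : ∑ x, (cayleyMatrix S).mulVec v x = k * ∑ x, v x := by
      simp only [Matrix.mulVec, dotProduct]
      rw [Finset.sum_comm, Finset.mul_sum]
      refine Finset.sum_congr rfl fun y _ => ?_
      rw [← Finset.sum_mul, cayley_sum_col]
    by_contra h
    exact hμk (mul_right_cancel₀ h (e1.symm.trans e2))
  -- entrywise complement identity
  have hent : ∀ x y : G, cayleyMatrix ((S ∪ {1})ᶜ : Set G) x y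
      = 1 - cayleyMatrix S x y - (if x = y then (1:ℝ) else 0) := by
    intro x y
    simp only [cayleyMatrix, Set.mem_compl_iff, Set.mem_union, Set.mem_singleton_iff]
    have hxy : x * y⁻¹ = 1 ↔ x = y := mul_inv_eq_one
    by_cases he : x = y
    · subst he; simp [h1]
    · by_cases hS : x * y⁻¹ ∈ S
      · simp [hS, he]
      · simp [hS, he, hxy]
  have hTv : (cayleyMatrix ((S ∪ {1})ᶜ : Set G)).mulVec v = (-(1+μ)) • v := by
    funext x
    have hvx : (cayleyMatrix S).mulVec v x = μ * v x := by rw [hv]; rfl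
    simp only [Matrix.mulVec, dotProduct] at hvx ⊢
    show _ = -(1+μ) * v x
    calc ∑ y, cayleyMatrix ((S ∪ {1})ᶜ : Set G) x y * v y
        = ∑ y, (v y - cayleyMatrix S x y * v y - (if x = y then (1:ℝ) else 0) * v y) := by
          refine Finset.sum_congr rfl fun y _ => ?_; rw [hent]; ring
      _ = (∑ y, v y) - (∑ y, cayleyMatrix S x y * v y) - v x := by
          rw [Finset.sum_sub_distrib, Finset.sum_sub_distrib]
          congr 1
          simp [Finset.sum_ite_eq]
      _ = -(1+μ) * v x := by rw [hs, hvx]; ring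
  obtain ⟨z, hz⟩ := hT (-(1+μ)) ⟨v, hv0, hTv⟩
  exact ⟨-z - 1, by push_cast; linarith⟩

theorem cayley_integral_iff_connected_cayley_integral (G : Type*) [Group G] [Fintype G] :
    (∀ S : Set G, (∀ s ∈ S, s⁻¹ ∈ S) → (1 : G) ∉ S →
        isIntegralMatrix (cayleyMatrix S)) ↔
      (∀ S : Set G, (∀ s ∈ S, s⁻¹ ∈ S) → (1 : G) ∉ S → Subgroup.closure S = ⊤ →
        isIntegralMatrix (cayleyMatrix S)) := by
  constructor
  · intro h S hsym h1 _
    exact h S hsym h1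
  · intro h S hsym h1
    by_cases hgen : Subgroup.closure S = ⊤
    · exact h S hsym h1 hgen
    · set T : Set G := (S ∪ {1})ᶜ with hTdef
      have hT1 : (1 : G) ∉ T := by simp [hTdef]
      have hTsym : ∀ s ∈ T, s⁻¹ ∈ T := by
        intro s hs
        simp only [hTdef, Set.mem_compl_iff, Set.mem_union, Set.mem_singleton_iff,
          not_or] at hs ⊢
        exact ⟨fun hc => hs.1 (by simpa using hsym _ hc), fun hc => hs.2 (by simpa using hc)⟩
      obtain ⟨g, hg⟩ : ∃ g : G, g ∉ Subgroup.closure S := by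
        by_contra hc
        push_neg at hc
        exact hgen ((Subgroup.eq_top_iff' _).2 hc)
      have hgT : g ∈ T := by
        simp only [hTdef, Set.mem_compl_iff, Set.mem_union, Set.mem_singleton_iff, not_or]
        exact ⟨fun hc => hg (Subgroup.subset_closure hc), fun hc => hg (hc ▸ (Subgroup.closure S).one_mem)⟩
      have hTgen : Subgroup.closure T = ⊤ := by
        rw [Subgroup.eq_top_iff' (Subgroup.closure T)]
        intro x
        by_cases hxS : x ∈ S
        · have hx : x ∈ Subgroup.closure S := Subgroup.subset_closure hxS
          have hxg : x * g ∈ T := by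
            simp only [hTdef, Set.mem_compl_iff, Set.mem_union, Set.mem_singleton_iff, not_or]
            constructor
            · intro hc
              exact hg (by simpa using (Subgroup.closure S).mul_mem (Subgroup.inv_mem _ hx) (Subgroup.subset_closure hc))
            · intro hc
              exact hg (by rw [eq_inv_of_mul_eq_one_right hc]; exact Subgroup.inv_mem _ hx)
          have : x = (x * g) * g⁻¹ := by group
          rw [this]
          exact Subgroup.mul_mem _ (Subgroup.subset_closure hxg)
            (Subgroup.inv_mem _ (Subgroup.subset_closure hgT))
        · by_cases hx1 : x = 1
          · rw [hx1]; exact Subgroup.one_mem _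
          · refine Subgroup.subset_closure ?_
            simp only [hTdef, Set.mem_compl_iff, Set.mem_union, Set.mem_singleton_iff, not_or]
            exact ⟨hxS, hx1⟩
      exact transfer S h1 (h T hTsym hT1 hTgen)
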